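/- Let q ≥ 3 and n ≥ 3, and let w ∈ B_q(n). Then every nonempty prefix u of w satisfies |u|_0 < |u|_1. -/
import Mathlib


/-- Value of a letter: 1 ↦ +1, 0 ↦ -1, other letters ↦ 0. -/
def mval (a : ℕ) : ℤ := if a = 1 then 1 else if a = 0 then -1 else 0

/-- Value-sum of a word. -/
def vsum (w : List ℕ) : ℤ := (w.map mval).sum

/-- A (q-2)-colored Motzkin word over the alphabet Z_q = {0,...,q-1}:
all letters < q, every prefix has nonnegative value-sum, total value-sum 0. -/
def IsMotzkinWord (q : ℕ) (w : List ℕ) : Prop :=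
  (∀ a ∈ w, a < q) ∧ (∀ u, u <+: w → 0 ≤ vsum u) ∧ vsum w = 0

/-- The set 𝓜_{q-2}(n) of (q-2)-colored Motzkin words of length n. -/
def MotzkinSet (q n : ℕ) : Set (List ℕ) := {w | w.length = n ∧ IsMotzkinWord q w}

/-- M_{q-2}(n), the number of (q-2)-colored Motzkin words of length n. -/
noncomputable def Mnum (q n : ℕ) : ℕ := (MotzkinSet q n).ncard

/-- The set Ê_{q-2}(n) of elevated (q-2)-colored Motzkin words of length n:
words 1α0 with α ∈ 𝓜_{q-2}(n-2). -/
def ElevatedSet (q n : ℕ) : Set (List ℕ) :=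
  {w | w.length = n ∧ ∃ α ∈ MotzkinSet q (n - 2), w = 1 :: (α ++ [0])}

/-- The set A_q(n). -/
def SetA (q n : ℕ) : Set (List ℕ) :=
  {w | ∃ i ≤ n / 2, ∃ α ∈ MotzkinSet q i, ∃ β ∈ ElevatedSet q (n - i), w = α ++ β} \
    {w | ∃ α ∈ ElevatedSet q (n / 2), ∃ β ∈ ElevatedSet q (n / 2), w = α ++ β}

/-- The set B_q(n). -/
def SetB (q n : ℕ) : Set (List ℕ) :=
  {w | ∃ i ≤ n / 2 - 1, ∃ α ∈ MotzkinSet q i, ∃ β ∈ ElevatedSet q (n - i - 1),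
    w = 1 :: (α ++ β)}

/-- The set C_q(n): words γ0 with γ a (q-2)-colored Motzkin word of length n-1
having no factor which is an elevated Motzkin word of length j ≥ ⌈n/2⌉. -/
def SetC (q n : ℕ) : Set (List ℕ) :=
  {w | ∃ γ ∈ MotzkinSet q (n - 1),
    (∀ j, (n + 1) / 2 ≤ j → ∀ β ∈ ElevatedSet q j, ¬ β <:+: γ) ∧ w = γ ++ [0]}

/-- The cross-bifix-free candidate set CBFS_q(n). -/
def CBFS (q n : ℕ) : Set (List ℕ) := SetA q n ∪ SetB q n ∪ SetC q n

/-- A word is bifix-free if no nonempty proper prefix of it is also a suffix of it. -/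
def BifixFree (w : List ℕ) : Prop :=
  ∀ u, u <+: w → u ≠ [] → u.length < w.length → ¬ u <:+ w

/-- BF_q(n): the set of bifix-free words of length n over Z_q. -/
def BF (q n : ℕ) : Set (List ℕ) := {w | w.length = n ∧ (∀ a ∈ w, a < q) ∧ BifixFree w}

/-- F_{k,q}(n): the number of words of length n over Z_q avoiding k consecutive 0's. -/
noncomputable def Fcount (k q n : ℕ) : ℕ :=
  {w : List ℕ | w.length = n ∧ (∀ a ∈ w, a < q) ∧ ¬ List.replicate k 0 <:+: w}.ncard

/-- The set S_{k,q}(n) of Bajic--Stojanovic--Chee--Kiah type words: words s of length n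
over Z_q with s₁ = ⋯ = s_k = 0, s_{k+1} ≠ 0, s_n ≠ 0, and such that the subword
s_{k+2} ⋯ s_{n-1} contains no k consecutive 0's. -/
def SetS (q k n : ℕ) : Set (List ℕ) :=
  {s | s.length = n ∧ (∀ a ∈ s, a < q) ∧ s.take k = List.replicate k 0 ∧
    s.getD k 0 ≠ 0 ∧ s.getLast? ≠ some 0 ∧
    ¬ List.replicate k 0 <:+: (s.drop (k + 1)).take (n - k - 2)}

lemma vsum_append (a b : List ℕ) : vsum (a ++ b) = vsum a + vsum b := by
  simp [vsum]

lemma vsum_eq_count (u : List ℕ) : vsum u = (u.count 1 : ℤ) - u.count 0 := by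
  induction u with
  | nil => simp [vsum]
  | cons a t ih =>
    simp only [vsum, List.map_cons, List.sum_cons, List.count_cons]
    rw [show (List.map mval t).sum = vsum t from rfl, ih, mval]
    by_cases h1 : a = 1 <;> by_cases h0 : a = 0 <;> simp [h1, h0] <;> omega

lemma prefix_append_cases {u a b : List ℕ} (h : u <+: a ++ b) :
    u <+: a ∨ ∃ v, v <+: b ∧ u = a ++ v := by
  obtain ⟨t, ht⟩ := h
  rcases List.append_eq_append_iff.mp ht with ⟨c, hc1, _⟩ | ⟨c, hc1, hc2⟩
  · exact Or.inl ⟨c, hc1.symm⟩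
  · exact Or.inr ⟨c, ⟨t, hc2.symm⟩, hc1⟩

lemma elevated_prefix_nonneg {q m : ℕ} {β u : List ℕ} (hβ : β ∈ ElevatedSet q m)
    (hu : u <+: β) : 0 ≤ vsum u := by
  obtain ⟨-, α, ⟨-, -, hpre, hsum⟩, rfl⟩ := hβ
  rcases hu with ⟨t, ht⟩
  cases u with
  | nil => simp [vsum]
  | cons x v =>
    simp only [List.cons_append, List.cons.injEq] at ht
    obtain ⟨rfl, ht⟩ := ht
    have hv : v <+: α ++ [0] := ⟨t, ht⟩
    have : vsum (1 :: v) = 1 + vsum v := by simp [vsum, mval]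
    rw [this]
    rcases prefix_append_cases hv with h | ⟨v', hv', rfl⟩
    · have := hpre v h; omega
    · have hv0 : vsum v' = 0 ∨ vsum v' = -1 := by
        rcases hv' with ⟨t', ht'⟩
        cases v' with
        | nil => left; simp [vsum]
        | cons y v'' =>
          cases v'' with
          | nil =>
            right
            have hy : y = 0 := by
              have h := congrArg (·.headI) ht'
              simp at h
              omega
            simp [vsum, mval, hy]
          | cons z v''' => simp at ht'
      rw [vsum_append]
      rcases hv0 with h | h <;> omega

/-- For w ∈ B_q(n), every nonempty prefix u of w satisfies |u|₀ < |u|₁. -/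
theorem setB_prefix_counts (q n : ℕ) (hq : 3 ≤ q) (hn : 3 ≤ n)
    (w : List ℕ) (hw : w ∈ SetB q n) :
    ∀ u, u <+: w → u ≠ [] → u.count 0 < u.count 1 := by
  obtain ⟨i, hi, α, hα, β, hβ, rfl⟩ := hw
  intro u hu hne
  cases u with
  | nil => exact absurd rfl hne
  | cons x v =>
    obtain ⟨t, ht⟩ := hu
    simp only [List.cons_append, List.cons.injEq] at ht
    obtain ⟨rfl, ht⟩ := ht
    have hv : v <+: α ++ β := ⟨t, ht⟩
    have hvpos : 0 ≤ vsum v := by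
      rcases prefix_append_cases hv with h | ⟨v', hv', rfl⟩
      · exact hα.2.2.1 v h
      · rw [vsum_append, hα.2.2.2, zero_add]
        exact elevated_prefix_nonneg hβ hv'
    have : 0 < vsum (1 :: v) := by
      have : vsum (1 :: v) = 1 + vsum v := by simp [vsum, mval]
      omega
    have hc := vsum_eq_count (1 :: v)
    omega
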